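/- arXiv:2205.08078 — 3 statements merged into one kernel-verified Lean document; each statement's English description precedes it below -/
import Mathlib

section
/- For each m, let p_MM(m) be the infimum over W_{1j} ∈ ℝ^{s×s} and W_{2j} ∈ ℝ^{d×c} (j = 1,…,m) of Σ_{i=1}^n L(Σ_{j=1}^m (W_{1j} X_i) W_{2j}, Y_i) + (β/2) Σ_{j=1}^m (‖W_{1j}‖_F² + ‖W_{2j}‖_F²). Then there exists m* ≤ min{s², dc} such that for every m ≥ m*, p_MM(m) equals the infimum over Z ∈ ℝ^{s²×dc} of Σ_{i=1}^n L(Σ_{t=1}^s Σ_{k=1}^d X_i[t,k] · Z^{(t,k)}, Y_i) + β‖Z‖_*. -/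
open Matrix Pointwise Kronecker

noncomputable section

/-- Frobenius norm of a real matrix. -/
def frobNorm {m n : Type*} [Fintype m] [Fintype n] (A : Matrix m n ℝ) : ℝ :=
  Real.sqrt (∑ i, ∑ j, (A i j) ^ 2)

/-- Nuclear norm of a real matrix: the sum of its singular values, i.e. the square
roots of the eigenvalues of `Aᴴ * A`. -/
def nuclearNorm {m n : Type*} [Fintype m] [Fintype n] [DecidableEq n] (A : Matrix m n ℝ) : ℝ :=
  ∑ i, Real.sqrt ((show (Aᵀ * A).IsHermitian by
    simpa [Matrix.conjTranspose_eq_transpose_of_trivial] using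
      Matrix.isHermitian_conjTranspose_mul_self A).eigenvalues i)

/-- The constrained nuclear norm `‖Z‖_{*,K}`. -/
def cNuclearNorm {N ι κ : Type*} [Fintype N] [Fintype ι] [Fintype κ] [DecidableEq κ]
    (K : Matrix N ι ℝ) (Z : Matrix ι κ ℝ) : ℝ :=
  sInf {t : ℝ | 0 ≤ t ∧ Z ∈ t • convexHull ℝ
    {M : Matrix ι κ ℝ | ∃ u v, M = Matrix.vecMulVec u v ∧ (∀ r, 0 ≤ (K *ᵥ u) r) ∧
      nuclearNorm M ≤ 1}}

/-- The 0-1 diagonal matrix `diag(1{A u ≥ 0})`. -/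
def gateArr {N q : Type*} [Fintype q] [DecidableEq N] (A : Matrix N q ℝ) (u : q → ℝ) :
    Matrix N N ℝ :=
  Matrix.diagonal fun r => if 0 ≤ (A *ᵥ u) r then (1 : ℝ) else 0

/-- The set of hyperplane arrangements of a matrix `A`. -/
def arrSet {N q : Type*} [Fintype q] [DecidableEq N] (A : Matrix N q ℝ) :
    Set (Matrix N N ℝ) :=
  Set.range (gateArr A)

/-- Entrywise ReLU of a matrix. -/
def reluM {m n : Type*} (A : Matrix m n ℝ) : Matrix m n ℝ :=
  Matrix.of fun i j => max (A i j) 0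

/-- Entrywise ReLU of a vector. -/
def reluV {m : Type*} (v : m → ℝ) : m → ℝ := fun i => max (v i) 0

/-- `circ(X)`: horizontal concatenation of all circulant row-shifts of `X`. -/
def circM {s p : ℕ} (X : Matrix (Fin s) (Fin p) ℝ) : Matrix (Fin s) (Fin s × Fin p) ℝ :=
  Matrix.of fun i q => X (i + q.1) q.2

namespace MixerAux
set_option linter.unusedSectionVars false

lemma sum_dot {ι α : Type*} [Fintype ι] [Fintype α] (u : α → ι → ℝ) (x : ι → ℝ) :
    (∑ j, u j) ⬝ᵥ x = ∑ j, u j ⬝ᵥ x := by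
  simp only [dotProduct, Finset.sum_apply, Finset.sum_mul]
  exact Finset.sum_comm

lemma dot_sum {ι α : Type*} [Fintype ι] [Fintype α] (x : ι → ℝ) (u : α → ι → ℝ) :
    x ⬝ᵥ (∑ j, u j) = ∑ j, x ⬝ᵥ u j := by
  rw [dotProduct_comm, sum_dot]
  exact Finset.sum_congr rfl fun j _ => dotProduct_comm _ _

def nsq {ι : Type*} [Fintype ι] (x : ι → ℝ) : ℝ := ∑ i, x i ^ 2

lemma nsq_nonneg {ι : Type*} [Fintype ι] (x : ι → ℝ) : 0 ≤ nsq x :=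
  Finset.sum_nonneg fun _ _ => sq_nonneg _

lemma nsq_eq_dot {ι : Type*} [Fintype ι] (x : ι → ℝ) : nsq x = x ⬝ᵥ x := by
  simp [nsq, dotProduct, sq]

lemma nsq_zero {ι : Type*} [Fintype ι] : nsq (0 : ι → ℝ) = 0 := by simp [nsq]

lemma nsq_smul {ι : Type*} [Fintype ι] (c : ℝ) (x : ι → ℝ) : nsq (c • x) = c ^ 2 * nsq x := by
  simp [nsq, Finset.mul_sum, mul_pow]

lemma dot_self_nonneg {ι : Type*} [Fintype ι] (x : ι → ℝ) : 0 ≤ x ⬝ᵥ x := by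
  rw [← nsq_eq_dot]; exact nsq_nonneg x

lemma dot_self_eq_zero' {ι : Type*} [Fintype ι] {x : ι → ℝ} (h : x ⬝ᵥ x = 0) : x = 0 := by
  funext i
  have h0 : ∀ j ∈ Finset.univ, (0:ℝ) ≤ x j * x j := fun j _ => mul_self_nonneg _
  have := (Finset.sum_eq_zero_iff_of_nonneg h0).mp h i (Finset.mem_univ i)
  simpa [mul_self_eq_zero] using this

/-- Bessel-type inequality for an "orthonormal or zero" finite family. -/
lemma bessel {ι α : Type*} [Fintype ι] [Fintype α] (u : α → ι → ℝ)
    (horth : ∀ i j, i ≠ j → u i ⬝ᵥ u j = 0) (hn : ∀ i, u i ⬝ᵥ u i ≤ 1)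
    (x : ι → ℝ) : ∑ i, (u i ⬝ᵥ x) ^ 2 ≤ x ⬝ᵥ x := by
  classical
  set c : α → ℝ := fun i => u i ⬝ᵥ x with hc
  set y : ι → ℝ := x - ∑ i, c i • u i with hy
  have hyy : (0:ℝ) ≤ y ⬝ᵥ y := dot_self_nonneg y
  have hexp : y ⬝ᵥ y = x ⬝ᵥ x - 2 * ∑ i, c i ^ 2 + ∑ i, c i ^ 2 * (u i ⬝ᵥ u i) := by
    have hcross : ∀ i, (∑ j, c j • u j) ⬝ᵥ u i = c i * (u i ⬝ᵥ u i) := by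
      intro i
      rw [sum_dot]
      rw [Finset.sum_eq_single i]
      · rw [smul_dotProduct]; simp [smul_eq_mul]
      · intro j _ hji
        rw [smul_dotProduct, horth j i hji, smul_zero]
      · intro h; exact absurd (Finset.mem_univ i) h
    have h1 : x ⬝ᵥ (∑ i, c i • u i) = ∑ i, c i ^ 2 := by
      rw [dot_sum]
      refine Finset.sum_congr rfl fun i _ => ?_
      rw [dotProduct_smul, smul_eq_mul]
      simp only [hc, sq, dotProduct_comm x (u i)]
    have h2 : (∑ i, c i • u i) ⬝ᵥ x = ∑ i, c i ^ 2 := by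
      rw [dotProduct_comm]; exact h1
    have h3 : (∑ i, c i • u i) ⬝ᵥ (∑ i, c i • u i) = ∑ i, c i ^ 2 * (u i ⬝ᵥ u i) := by
      rw [dot_sum]
      refine Finset.sum_congr rfl fun i _ => ?_
      rw [dotProduct_smul, smul_eq_mul, hcross i]
      ring
    rw [hy, sub_dotProduct, dotProduct_sub, dotProduct_sub, h1, h2, h3]
    ring
  have hle : ∑ i, c i ^ 2 * (u i ⬝ᵥ u i) ≤ ∑ i, c i ^ 2 := by
    refine Finset.sum_le_sum fun i _ => ?_
    calc c i ^ 2 * (u i ⬝ᵥ u i) ≤ c i ^ 2 * 1 :=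
          mul_le_mul_of_nonneg_left (hn i) (sq_nonneg _)
      _ = c i ^ 2 := mul_one _
  linarith [hyy, hexp, hle]

/-- Cauchy–Schwarz. -/
lemma cs_sum {α : Type*} [Fintype α] (a b : α → ℝ) :
    ∑ i, a i * b i ≤ Real.sqrt (∑ i, a i ^ 2) * Real.sqrt (∑ i, b i ^ 2) := by
  have h := Finset.sum_mul_sq_le_sq_mul_sq Finset.univ a b
  calc ∑ i, a i * b i ≤ |∑ i, a i * b i| := le_abs_self _
    _ = Real.sqrt ((∑ i, a i * b i) ^ 2) := (Real.sqrt_sq_eq_abs _).symm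
    _ ≤ Real.sqrt ((∑ i, a i ^ 2) * ∑ i, b i ^ 2) := Real.sqrt_le_sqrt h
    _ = _ := Real.sqrt_mul (Finset.sum_nonneg fun _ _ => sq_nonneg _) _

lemma extend_sum {α M : Type*} [Fintype α] [AddCommMonoid M] {m : ℕ}
    (e : α ↪ Fin m) (g : α → M) :
    ∑ j : Fin m, (if h : ∃ i, e i = j then g h.choose else 0) = ∑ i, g i := by
  classical
  have key : ∀ j : Fin m, (if h : ∃ i, e i = j then g h.choose else 0)
      = ∑ i : α, if e i = j then g i else 0 := by
    intro j
    by_cases h : ∃ i, e i = j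
    · rw [dif_pos h]
      have he : e h.choose = j := h.choose_spec
      have hcond : ∀ i : α, (e i = j) = (i = h.choose) := fun i =>
        propext ⟨fun hh => e.injective (hh.trans he.symm), fun hh => by rw [hh, he]⟩
      rw [Finset.sum_congr rfl (fun i _ => if_congr (iff_of_eq (hcond i)) rfl rfl)]
      simp
    · rw [dif_neg h]
      symm
      refine Finset.sum_eq_zero fun i _ => ?_
      rw [if_neg fun hh => h ⟨i, hh⟩]
  rw [Finset.sum_congr rfl fun j _ => key j, Finset.sum_comm]
  refine Finset.sum_congr rfl fun i _ => ?_
  simp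

lemma iInf_eq_of_dominates {α β : Type*} [Nonempty α] [Nonempty β] (f : α → ℝ) (g : β → ℝ)
    (h1 : ∀ a, ∃ b, g b ≤ f a) (h2 : ∀ b, ∃ a, f a ≤ g b) : ⨅ a, f a = ⨅ b, g b := by
  by_cases hb : BddBelow (Set.range g)
  · obtain ⟨C, hC⟩ := hb
    have hfb : BddBelow (Set.range f) := by
      refine ⟨C, fun x hx => ?_⟩
      obtain ⟨a, rfl⟩ := hx
      obtain ⟨b, hba⟩ := h1 a
      exact (hC (Set.mem_range_self b)).trans hba
    apply le_antisymm
    · refine le_ciInf fun b => ?_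
      obtain ⟨a, ha⟩ := h2 b
      exact (ciInf_le hfb a).trans ha
    · refine le_ciInf fun a => ?_
      obtain ⟨b, hba⟩ := h1 a
      exact (ciInf_le ⟨C, hC⟩ b).trans hba
  · have hf : ¬ BddBelow (Set.range f) := by
      intro ⟨C, hC⟩
      apply hb
      refine ⟨C, fun x hx => ?_⟩
      obtain ⟨b, rfl⟩ := hx
      obtain ⟨a, ha⟩ := h2 b
      exact (hC (Set.mem_range_self a)).trans ha
    rw [iInf, iInf, Real.sInf_of_not_bddBelow hb, Real.sInf_of_not_bddBelow hf]



variable {ι κ : Type*} [Fintype ι] [Fintype κ] [DecidableEq κ]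

/-- Eigenvalues of `Aᴴ * A`. -/
def lam (A : Matrix ι κ ℝ) (i : κ) : ℝ :=
  (show (Aᵀ * A).IsHermitian by
    simpa [Matrix.conjTranspose_eq_transpose_of_trivial] using
      Matrix.isHermitian_conjTranspose_mul_self A).eigenvalues i

/-- Orthonormal eigenvectors of `Aᴴ * A`. -/
def evec (A : Matrix ι κ ℝ) (i : κ) : κ → ℝ :=
  fun k => (show (Aᵀ * A).IsHermitian by
    simpa [Matrix.conjTranspose_eq_transpose_of_trivial] using
      Matrix.isHermitian_conjTranspose_mul_self A).eigenvectorBasis i k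

lemma nuclearNorm_eq (A : Matrix ι κ ℝ) : nuclearNorm A = ∑ i, Real.sqrt (lam A i) := rfl

lemma lam_nonneg (A : Matrix ι κ ℝ) (i : κ) : 0 ≤ lam A i :=
  Matrix.eigenvalues_conjTranspose_mul_self_nonneg A i

lemma evec_dot (A : Matrix ι κ ℝ) (i j : κ) :
    evec A i ⬝ᵥ evec A j = if i = j then 1 else 0 := by
  have h := (orthonormal_iff_ite.mp
    (show (Aᵀ * A).IsHermitian by
    simpa [Matrix.conjTranspose_eq_transpose_of_trivial] using
      Matrix.isHermitian_conjTranspose_mul_self A).eigenvectorBasis.orthonormal) i j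
  simpa [PiLp.inner_apply, RCLike.inner_apply, starRingEnd_apply, dotProduct,
    evec, mul_comm] using h

lemma mulVec_evec (A : Matrix ι κ ℝ) (i : κ) :
    (Aᴴ * A) *ᵥ evec A i = lam A i • evec A i :=
  (show (Aᵀ * A).IsHermitian by
    simpa [Matrix.conjTranspose_eq_transpose_of_trivial] using
      Matrix.isHermitian_conjTranspose_mul_self A).mulVec_eigenvectorBasis i

lemma Amulvec_dot (A : Matrix ι κ ℝ) (i j : κ) :
    (A *ᵥ evec A i) ⬝ᵥ (A *ᵥ evec A j) = lam A i * (if i = j then 1 else 0) := by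
  rw [dotProduct_comm, Matrix.dotProduct_mulVec, ← Matrix.mulVec_transpose,
    ← Matrix.conjTranspose_eq_transpose_of_trivial, Matrix.mulVec_mulVec,
    mulVec_evec, smul_dotProduct, smul_eq_mul, evec_dot]
  by_cases h : i = j
  · subst h; simp
  · simp [h, Ne.symm h]

lemma sum_outer_evec (A : Matrix ι κ ℝ) :
    ∑ i, vecMulVec (evec A i) (evec A i) = (1 : Matrix κ κ ℝ) := by
  have hB := (show (Aᵀ * A).IsHermitian by
    simpa [Matrix.conjTranspose_eq_transpose_of_trivial] using
      Matrix.isHermitian_conjTranspose_mul_self A)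
  have hV : (hB.eigenvectorUnitary : Matrix κ κ ℝ) * star (hB.eigenvectorUnitary : Matrix κ κ ℝ)
      = 1 := mem_unitaryGroup_iff.mp hB.eigenvectorUnitary.2
  ext a b
  have := congrFun (congrFun (congrArg (fun M : Matrix κ κ ℝ => (M : Matrix κ κ ℝ)) hV) a) b
  simp only [Matrix.mul_apply, Matrix.star_apply, star_trivial,
    Matrix.IsHermitian.eigenvectorUnitary_apply] at this
  simpa [Matrix.sum_apply, vecMulVec_apply, evec, mul_comm] using this

lemma vecMulVec_smul_smul (c d : ℝ) (a : ι → ℝ) (b : κ → ℝ) :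
    vecMulVec (c • a) (d • b) = (c * d) • vecMulVec a b := by
  ext r s; simp [vecMulVec_apply]; ring

lemma vecMulVec_zero_left (b : κ → ℝ) : vecMulVec (0 : ι → ℝ) b = 0 := by
  ext r s; simp [vecMulVec_apply]

lemma vecMulVec_zero_right (a : ι → ℝ) : vecMulVec a (0 : κ → ℝ) = 0 := by
  ext r s; simp [vecMulVec_apply]

lemma vecMulVec_mulVec' (a : ι → ℝ) (b : κ → ℝ) (w : κ → ℝ) :
    vecMulVec a b *ᵥ w = (b ⬝ᵥ w) • a := by
  funext r
  simp only [Matrix.mulVec, vecMulVec_apply, dotProduct, Pi.smul_apply, smul_eq_mul,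
    Finset.sum_mul]
  refine Finset.sum_congr rfl fun k _ => by ring

lemma sum_mulVec' {α : Type*} [Fintype α] (M : α → Matrix ι κ ℝ) (w : κ → ℝ) :
    (∑ j, M j) *ᵥ w = ∑ j, M j *ᵥ w := by
  ext r
  simp only [Matrix.mulVec, dotProduct, Finset.sum_apply, Matrix.sum_apply,
    Finset.sum_mul]
  rw [Finset.sum_comm]

lemma mul_vecMulVec (A : Matrix ι κ ℝ) (v w : κ → ℝ) :
    A * vecMulVec v w = vecMulVec (A *ᵥ v) w := by
  ext r s
  simp [Matrix.mul_apply, vecMulVec_apply, Matrix.mulVec, dotProduct, Finset.sum_mul,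
    mul_assoc]

lemma nuclear_le {m : ℕ} (x : Fin m → ι → ℝ) (y : Fin m → κ → ℝ) :
    nuclearNorm (∑ j, vecMulVec (x j) (y j)) ≤
      ∑ j, Real.sqrt (nsq (x j)) * Real.sqrt (nsq (y j)) := by
  classical
  set A : Matrix ι κ ℝ := ∑ j, vecMulVec (x j) (y j) with hA
  set u : κ → ι → ℝ :=
    fun i => if lam A i = 0 then 0 else (Real.sqrt (lam A i))⁻¹ • (A *ᵥ evec A i) with hu
  have hww : ∀ i, (A *ᵥ evec A i) ⬝ᵥ (A *ᵥ evec A i) = lam A i := by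
    intro i; rw [Amulvec_dot]; simp
  have hw0 : ∀ i, lam A i = 0 → A *ᵥ evec A i = 0 := by
    intro i h0
    exact dot_self_eq_zero' (by rw [hww i, h0])
  have horth : ∀ i j, i ≠ j → u i ⬝ᵥ u j = 0 := by
    intro i j hij
    by_cases h1 : lam A i = 0
    · simp [hu, h1]
    by_cases h2 : lam A j = 0
    · simp [hu, h2]
    simp only [hu, if_neg h1, if_neg h2, smul_dotProduct, dotProduct_smul,
      Amulvec_dot, if_neg hij, smul_eq_mul]
    ring
  have hn : ∀ i, u i ⬝ᵥ u i ≤ 1 := by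
    intro i
    by_cases h1 : lam A i = 0
    · simp [hu, h1]
    · have hpos : 0 < lam A i := lt_of_le_of_ne (lam_nonneg A i) (Ne.symm h1)
      have : u i ⬝ᵥ u i = 1 := by
        simp only [hu, if_neg h1, smul_dotProduct, dotProduct_smul, hww i,
          smul_eq_mul]
        rw [← mul_assoc, ← mul_inv]
        rw [← Real.sqrt_mul_self (le_of_lt hpos)] -- lam = sqrt*sqrt
        field_simp
        rw [Real.sq_sqrt (Real.sqrt_nonneg _)]
      rw [this]
  have hval : ∀ i, Real.sqrt (lam A i) = u i ⬝ᵥ (A *ᵥ evec A i) := by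
    intro i
    by_cases h1 : lam A i = 0
    · simp [hu, h1]
    · simp only [hu, if_neg h1, smul_dotProduct, hww i, smul_eq_mul]
      have hpos : 0 < lam A i := lt_of_le_of_ne (lam_nonneg A i) (Ne.symm h1)
      rw [eq_comm, inv_mul_eq_iff_eq_mul₀ (by positivity),
        Real.mul_self_sqrt (le_of_lt hpos)]
  calc nuclearNorm A = ∑ i, Real.sqrt (lam A i) := nuclearNorm_eq A
    _ = ∑ i, u i ⬝ᵥ (A *ᵥ evec A i) := Finset.sum_congr rfl fun i _ => hval i
    _ = ∑ i, ∑ j, (u i ⬝ᵥ x j) * (evec A i ⬝ᵥ y j) := by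
        refine Finset.sum_congr rfl fun i _ => ?_
        rw [hA, sum_mulVec', dot_sum]
        refine Finset.sum_congr rfl fun j _ => ?_
        rw [vecMulVec_mulVec', dotProduct_smul, smul_eq_mul,
          dotProduct_comm (y j)]
        ring
    _ = ∑ j, ∑ i, (u i ⬝ᵥ x j) * (evec A i ⬝ᵥ y j) := Finset.sum_comm
    _ ≤ ∑ j, Real.sqrt (nsq (x j)) * Real.sqrt (nsq (y j)) := by
        refine Finset.sum_le_sum fun j _ => ?_
        calc ∑ i, (u i ⬝ᵥ x j) * (evec A i ⬝ᵥ y j)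
            ≤ Real.sqrt (∑ i, (u i ⬝ᵥ x j) ^ 2) * Real.sqrt (∑ i, (evec A i ⬝ᵥ y j) ^ 2) :=
              cs_sum _ _
          _ ≤ Real.sqrt (nsq (x j)) * Real.sqrt (nsq (y j)) := by
              have b1 : ∑ i, (u i ⬝ᵥ x j) ^ 2 ≤ nsq (x j) := by
                rw [nsq_eq_dot]; exact bessel u horth hn (x j)
              have b2 : ∑ i, (evec A i ⬝ᵥ y j) ^ 2 ≤ nsq (y j) := by
                rw [nsq_eq_dot]
                refine bessel (evec A) (fun i k hik => by rw [evec_dot, if_neg hik])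
                  (fun i => by rw [evec_dot, if_pos rfl]) (y j)
              exact mul_le_mul (Real.sqrt_le_sqrt b1) (Real.sqrt_le_sqrt b2)
                (Real.sqrt_nonneg _) (Real.sqrt_nonneg _)

lemma restrict_sum {M : Type*} [AddCommMonoid M] (p : κ → Prop) [DecidablePred p]
    (g : κ → M) (hg : ∀ i, ¬ p i → g i = 0) :
    ∑ i, g i = ∑ i : {i // p i}, g i.1 := by
  classical
  rw [← Finset.sum_filter_of_ne (p := p) (fun i _ hi => by
    by_contra hpi; exact hi (hg i hpi))]
  rw [← Finset.sum_subtype (Finset.univ.filter p) (fun i => by simp) g]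

lemma card_nonzero_le (A : Matrix ι κ ℝ) :
    Fintype.card {i // lam A i ≠ 0} ≤ min (Fintype.card ι) (Fintype.card κ) := by
  have h1 : (Aᴴ * A).rank = Fintype.card {i // lam A i ≠ 0} :=
    (show (Aᵀ * A).IsHermitian by
    simpa [Matrix.conjTranspose_eq_transpose_of_trivial] using
      Matrix.isHermitian_conjTranspose_mul_self A).rank_eq_card_non_zero_eigs
  rw [Matrix.conjTranspose_eq_transpose_of_trivial, Matrix.rank_transpose_mul_self] at h1
  rw [← h1]
  exact le_min (Matrix.rank_le_card_height A) (Matrix.rank_le_card_width A)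

lemma nuclear_factor (A : Matrix ι κ ℝ) (m : ℕ)
    (hm : min (Fintype.card ι) (Fintype.card κ) ≤ m) :
    ∃ (x : Fin m → ι → ℝ) (y : Fin m → κ → ℝ),
      A = ∑ j, vecMulVec (x j) (y j) ∧
      ∑ j, (nsq (x j) + nsq (y j)) = 2 * nuclearNorm A := by
  classical
  set σ : κ → ℝ := fun i => Real.sqrt (lam A i) with hσ
  set τ : κ → ℝ := fun i => Real.sqrt (σ i) with hτ
  set x₀ : κ → ι → ℝ :=
    fun i => if lam A i = 0 then 0 else (τ i / σ i) • (A *ᵥ evec A i) with hx₀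
  set y₀ : κ → κ → ℝ := fun i => τ i • evec A i with hy₀
  have hww : ∀ i, (A *ᵥ evec A i) ⬝ᵥ (A *ᵥ evec A i) = lam A i := by
    intro i; rw [Amulvec_dot]; simp
  have hw0 : ∀ i, lam A i = 0 → A *ᵥ evec A i = 0 := by
    intro i h0; exact dot_self_eq_zero' (by rw [hww i, h0])
  have hσpos : ∀ i, lam A i ≠ 0 → 0 < σ i := by
    intro i h
    exact Real.sqrt_pos.mpr (lt_of_le_of_ne (lam_nonneg A i) (Ne.symm h))
  have hτsq : ∀ i, τ i ^ 2 = σ i := fun i =>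
    Real.sq_sqrt (Real.sqrt_nonneg _)
  have hσsq : ∀ i, σ i ^ 2 = lam A i := fun i => Real.sq_sqrt (lam_nonneg A i)
  -- the outer-product representation
  have houter : ∀ i, vecMulVec (x₀ i) (y₀ i) = vecMulVec (A *ᵥ evec A i) (evec A i) := by
    intro i
    by_cases h : lam A i = 0
    · rw [hw0 i h]
      simp only [hx₀, if_pos h, vecMulVec_zero_left]
    · simp only [hx₀, hy₀, if_neg h, vecMulVec_smul_smul]
      have : τ i / σ i * τ i = 1 := by
        have h1 : σ i ≠ 0 := ne_of_gt (hσpos i h)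
        field_simp
        rw [hτsq i]
      rw [this, one_smul]
  have hsumA : ∑ i, vecMulVec (x₀ i) (y₀ i) = A := by
    calc ∑ i, vecMulVec (x₀ i) (y₀ i)
        = ∑ i, A * vecMulVec (evec A i) (evec A i) := by
          refine Finset.sum_congr rfl fun i _ => ?_
          rw [houter i, mul_vecMulVec]
      _ = A * ∑ i, vecMulVec (evec A i) (evec A i) := by rw [← Matrix.mul_sum]
      _ = A := by rw [sum_outer_evec, Matrix.mul_one]
  have hcost : ∀ i, nsq (x₀ i) + nsq (y₀ i) = 2 * σ i := by
    intro i
    have hy : nsq (y₀ i) = σ i := by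
      rw [hy₀]
      simp only
      rw [nsq_smul, hτsq i, nsq_eq_dot, evec_dot, if_pos rfl, mul_one]
    by_cases h : lam A i = 0
    · have : σ i = 0 := by rw [hσ]; simp [h]
      rw [hy, this]
      simp [hx₀, h, nsq_zero]
    · have hx : nsq (x₀ i) = σ i := by
        rw [hx₀]
        simp only [if_neg h]
        rw [nsq_smul, nsq_eq_dot, hww i, div_pow, hτsq i, hσsq i, div_mul_cancel₀ _ h]
      rw [hx, hy]; ring
  -- zero terms vanish entirely
  have hzx : ∀ i, lam A i = 0 → x₀ i = 0 := fun i h => by simp [hx₀, h]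
  have hzy : ∀ i, lam A i = 0 → y₀ i = 0 := by
    intro i h
    have : τ i = 0 := by rw [hτ]; simp [hσ, h]
    simp [hy₀, this]
  -- embed the nonzero indices into `Fin m`
  have hcard : Fintype.card {i // lam A i ≠ 0} ≤ m := le_trans (card_nonzero_le A) hm
  obtain ⟨e⟩ : Nonempty ({i // lam A i ≠ 0} ↪ Fin m) :=
    Function.Embedding.nonempty_of_card_le (by simpa using hcard)
  refine ⟨fun j => if h : ∃ i, e i = j then x₀ h.choose.1 else 0,
    fun j => if h : ∃ i, e i = j then y₀ h.choose.1 else 0, ?_, ?_⟩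
  · have h1 : ∀ j : Fin m,
        vecMulVec (if h : ∃ i, e i = j then x₀ h.choose.1 else 0)
          (if h : ∃ i, e i = j then y₀ h.choose.1 else 0)
        = if h : ∃ i, e i = j then vecMulVec (x₀ h.choose.1) (y₀ h.choose.1) else 0 := by
      intro j
      by_cases h : ∃ i, e i = j
      · rw [dif_pos h, dif_pos h, dif_pos h]
      · rw [dif_neg h, dif_neg h, dif_neg h, vecMulVec_zero_left]
    rw [Finset.sum_congr rfl fun j _ => h1 j,
      extend_sum e (fun i => vecMulVec (x₀ i.1) (y₀ i.1)),
      ← restrict_sum (fun i => lam A i ≠ 0) (fun i => vecMulVec (x₀ i) (y₀ i))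
        (fun i hi => by
          have h0 : lam A i = 0 := not_not.mp hi
          show vecMulVec (x₀ i) (y₀ i) = 0
          rw [hzx i h0, vecMulVec_zero_left]),
      hsumA]
  · have h1 : ∀ j : Fin m,
        nsq (if h : ∃ i, e i = j then x₀ h.choose.1 else 0)
          + nsq (if h : ∃ i, e i = j then y₀ h.choose.1 else 0)
        = if h : ∃ i, e i = j then nsq (x₀ h.choose.1) + nsq (y₀ h.choose.1) else 0 := by
      intro j
      by_cases h : ∃ i, e i = j
      · rw [dif_pos h, dif_pos h, dif_pos h]
      · rw [dif_neg h, dif_neg h, dif_neg h, nsq_zero, nsq_zero, add_zero]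
    rw [Finset.sum_congr rfl fun j _ => h1 j,
      extend_sum e (fun i => nsq (x₀ i.1) + nsq (y₀ i.1)),
      ← restrict_sum (fun i => lam A i ≠ 0) (fun i => nsq (x₀ i) + nsq (y₀ i))
        (fun i hi => by
          have h0 : lam A i = 0 := not_not.mp hi
          show nsq (x₀ i) + nsq (y₀ i) = 0
          rw [hzx i h0, hzy i h0, nsq_zero, nsq_zero, add_zero]),
      Finset.sum_congr rfl fun i _ => hcost i, nuclearNorm_eq, Finset.mul_sum]

end MixerAux

namespace MixerAux

/-- Vectorization of the first-factor weight matrix. -/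
def vec1 {s : ℕ} (W : Matrix (Fin s) (Fin s) ℝ) : Fin s × Fin s → ℝ := fun q => W q.2 q.1

/-- Vectorization of the second-factor weight matrix. -/
def vec2 {d c : ℕ} (W : Matrix (Fin d) (Fin c) ℝ) : Fin d × Fin c → ℝ := fun r => W r.1 r.2

lemma frob_sq_eq_nsq1 {s : ℕ} (W : Matrix (Fin s) (Fin s) ℝ) :
    frobNorm W ^ 2 = nsq (vec1 W) := by
  rw [frobNorm, Real.sq_sqrt (by positivity), nsq]
  rw [Fintype.sum_prod_type]
  exact Finset.sum_comm

lemma frob_sq_eq_nsq2 {d c : ℕ} (W : Matrix (Fin d) (Fin c) ℝ) :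
    frobNorm W ^ 2 = nsq (vec2 W) := by
  rw [frobNorm, Real.sq_sqrt (by positivity), nsq]
  rw [Fintype.sum_prod_type]
  rfl

lemma fit_eq {s d c : ℕ} (X : Matrix (Fin s) (Fin d) ℝ) {m : ℕ}
    (W1 : Fin m → Matrix (Fin s) (Fin s) ℝ) (W2 : Fin m → Matrix (Fin d) (Fin c) ℝ)
    (Z : Matrix (Fin s × Fin s) (Fin d × Fin c) ℝ)
    (hZ : Z = ∑ j, vecMulVec (vec1 (W1 j)) (vec2 (W2 j))) :
    (∑ j, W1 j * X * W2 j)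
      = ∑ t : Fin s, ∑ k : Fin d, X t k • (Matrix.of fun a p => Z (t, a) (k, p)) := by
  subst hZ
  ext a p
  simp only [Matrix.sum_apply, Matrix.mul_apply, Matrix.smul_apply, Matrix.of_apply,
    vecMulVec_apply, smul_eq_mul, vec1, vec2]
  -- both sides are triple sums; reorder
  calc ∑ j : Fin m, ∑ k : Fin d, (∑ t : Fin s, W1 j a t * X t k) * W2 j k p
      = ∑ j : Fin m, ∑ k : Fin d, ∑ t : Fin s, W1 j a t * X t k * W2 j k p := by
        refine Finset.sum_congr rfl fun j _ => Finset.sum_congr rfl fun k _ => ?_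
        rw [Finset.sum_mul]
    _ = ∑ k : Fin d, ∑ j : Fin m, ∑ t : Fin s, W1 j a t * X t k * W2 j k p :=
        Finset.sum_comm
    _ = ∑ k : Fin d, ∑ t : Fin s, ∑ j : Fin m, W1 j a t * X t k * W2 j k p :=
        Finset.sum_congr rfl fun k _ => Finset.sum_comm
    _ = ∑ t : Fin s, ∑ k : Fin d, ∑ j : Fin m, W1 j a t * X t k * W2 j k p :=
        Finset.sum_comm
    _ = ∑ t : Fin s, ∑ k : Fin d, ∑ j : Fin m, X t k * (W1 j a t * W2 j k p) := by
        refine Finset.sum_congr rfl fun t _ => Finset.sum_congr rfl fun k _ =>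
          Finset.sum_congr rfl fun j _ => by ring
    _ = ∑ t : Fin s, ∑ k : Fin d, X t k * ∑ j : Fin m, W1 j a t * W2 j k p := by
        refine Finset.sum_congr rfl fun t _ => Finset.sum_congr rfl fun k _ => ?_
        rw [Finset.mul_sum]

lemma amgm_sqrt (a b : ℝ) (ha : 0 ≤ a) (hb : 0 ≤ b) :
    Real.sqrt a * Real.sqrt b ≤ (a + b) / 2 := by
  nlinarith [sq_nonneg (Real.sqrt a - Real.sqrt b), Real.sq_sqrt ha, Real.sq_sqrt hb,
    Real.sqrt_nonneg a, Real.sqrt_nonneg b]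

end MixerAux

/-- **Theorem 3 (linear-activation MLP-Mixer).**
For `m ≥ m*` with `m* ≤ min {s², dc}`, the non-convex linear MLP-Mixer training
problem equals a convex program whose fitting term is a data-weighted sum of the
blocks `Z^{(t,k)}` with nuclear-norm regularization. -/
theorem linear_mlp_mixer_convex_dual
    (n s d c : ℕ) (hn : 0 < n) (hs : 0 < s) (hd : 0 < d) (hc : 0 < c)
    (β : ℝ) (hβ : 0 < β)
    (X : Fin n → Matrix (Fin s) (Fin d) ℝ) (Y : Fin n → Matrix (Fin s) (Fin c) ℝ)
    (L : Matrix (Fin s) (Fin c) ℝ → Matrix (Fin s) (Fin c) ℝ → ℝ)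
    (hconv : ∀ Yi, ConvexOn ℝ Set.univ fun R => L R Yi)
    (hlsc : ∀ Yi, LowerSemicontinuous fun R => L R Yi) :
    ∃ mstar : ℕ, mstar ≤ min (s * s) (d * c) ∧ ∀ m : ℕ, mstar ≤ m →
      (⨅ W : (Fin m → Matrix (Fin s) (Fin s) ℝ) × (Fin m → Matrix (Fin d) (Fin c) ℝ),
        (∑ i, L (∑ j, W.1 j * X i * W.2 j) (Y i)) +
          (β / 2) * ∑ j, (frobNorm (W.1 j) ^ 2 + frobNorm (W.2 j) ^ 2))
      =
      (⨅ Z : Matrix (Fin s × Fin s) (Fin d × Fin c) ℝ,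
        (∑ i, L (∑ t : Fin s, ∑ k : Fin d,
            X i t k • (Matrix.of fun a p => Z (t, a) (k, p))) (Y i)) +
          β * nuclearNorm Z) := by

  classical
  refine ⟨min (s * s) (d * c), le_refl _, fun m hm => ?_⟩
  have hcard : min (Fintype.card (Fin s × Fin s)) (Fintype.card (Fin d × Fin c)) ≤ m := by
    simpa [Fintype.card_prod] using hm
  apply MixerAux.iInf_eq_of_dominates
  · -- from weights to a convex-program candidate
    intro W
    refine ⟨∑ j, vecMulVec (MixerAux.vec1 (W.1 j)) (MixerAux.vec2 (W.2 j)), ?_⟩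
    set Z : Matrix (Fin s × Fin s) (Fin d × Fin c) ℝ :=
      ∑ j, vecMulVec (MixerAux.vec1 (W.1 j)) (MixerAux.vec2 (W.2 j)) with hZ
    have hfit : ∀ i, (∑ j, W.1 j * X i * W.2 j)
        = ∑ t : Fin s, ∑ k : Fin d, X i t k • (Matrix.of fun a p => Z (t, a) (k, p)) :=
      fun i => MixerAux.fit_eq (X i) W.1 W.2 Z hZ
    have hL : (∑ i, L (∑ t : Fin s, ∑ k : Fin d,
          X i t k • (Matrix.of fun a p => Z (t, a) (k, p))) (Y i))
        = ∑ i, L (∑ j, W.1 j * X i * W.2 j) (Y i) :=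
      Finset.sum_congr rfl fun i _ => by rw [hfit i]
    have hreg : β * nuclearNorm Z
        ≤ (β / 2) * ∑ j, (frobNorm (W.1 j) ^ 2 + frobNorm (W.2 j) ^ 2) := by
      have h1 : nuclearNorm Z ≤
          ∑ j, Real.sqrt (MixerAux.nsq (MixerAux.vec1 (W.1 j)))
            * Real.sqrt (MixerAux.nsq (MixerAux.vec2 (W.2 j))) :=
        MixerAux.nuclear_le _ _
      have h2 : ∑ j, Real.sqrt (MixerAux.nsq (MixerAux.vec1 (W.1 j)))
            * Real.sqrt (MixerAux.nsq (MixerAux.vec2 (W.2 j)))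
          ≤ ∑ j, (frobNorm (W.1 j) ^ 2 + frobNorm (W.2 j) ^ 2) / 2 := by
        refine Finset.sum_le_sum fun j _ => ?_
        rw [MixerAux.frob_sq_eq_nsq1, MixerAux.frob_sq_eq_nsq2]
        exact MixerAux.amgm_sqrt _ _ (MixerAux.nsq_nonneg _) (MixerAux.nsq_nonneg _)
      calc β * nuclearNorm Z
          ≤ β * ∑ j, (frobNorm (W.1 j) ^ 2 + frobNorm (W.2 j) ^ 2) / 2 :=
            mul_le_mul_of_nonneg_left (h1.trans h2) (le_of_lt hβ)
        _ = (β / 2) * ∑ j, (frobNorm (W.1 j) ^ 2 + frobNorm (W.2 j) ^ 2) := by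
            rw [← Finset.sum_div]; ring
    rw [hL]
    exact add_le_add_right hreg _
  · -- from a convex-program candidate back to weights
    intro Z
    obtain ⟨x, y, hfac, hcost⟩ := MixerAux.nuclear_factor Z m hcard
    refine ⟨(fun j => Matrix.of fun a t => x j (t, a), fun j => Matrix.of fun k p => y j (k, p)),
      le_of_eq ?_⟩
    have hv1 : ∀ j, MixerAux.vec1 (Matrix.of fun a t => x j (t, a)) = x j := by
      intro j; funext q; cases q; rfl
    have hv2 : ∀ j, MixerAux.vec2 (Matrix.of fun k p => y j (k, p)) = y j := by
      intro j; funext r; cases r; rfl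
    have hZ : Z = ∑ j, vecMulVec
        (MixerAux.vec1 (Matrix.of fun a t => x j (t, a)))
        (MixerAux.vec2 (Matrix.of fun k p => y j (k, p))) := by
      rw [Finset.sum_congr rfl fun j _ => by rw [hv1 j, hv2 j]]
      exact hfac
    have hfit : ∀ i, (∑ j, (Matrix.of fun a t => x j (t, a)) * X i
          * (Matrix.of fun k p => y j (k, p)))
        = ∑ t : Fin s, ∑ k : Fin d, X i t k • (Matrix.of fun a p => Z (t, a) (k, p)) :=
      fun i => MixerAux.fit_eq (X i) _ _ Z hZ
    have hL : (∑ i, L (∑ j, (Matrix.of fun a t => x j (t, a)) * X i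
          * (Matrix.of fun k p => y j (k, p))) (Y i))
        = ∑ i, L (∑ t : Fin s, ∑ k : Fin d,
            X i t k • (Matrix.of fun a p => Z (t, a) (k, p))) (Y i) :=
      Finset.sum_congr rfl fun i _ => by rw [hfit i]
    have hreg : (β / 2) * ∑ j, (frobNorm (Matrix.of fun a t => x j (t, a)) ^ 2
          + frobNorm (Matrix.of fun k p => y j (k, p)) ^ 2)
        = β * nuclearNorm Z := by
      have : ∑ j, (frobNorm (Matrix.of fun a t => x j (t, a)) ^ 2
            + frobNorm (Matrix.of fun k p => y j (k, p)) ^ 2)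
          = ∑ j, (MixerAux.nsq (x j) + MixerAux.nsq (y j)) := by
        refine Finset.sum_congr rfl fun j _ => ?_
        rw [MixerAux.frob_sq_eq_nsq1, MixerAux.frob_sq_eq_nsq2, hv1 j, hv2 j]
      rw [this, hcost]; ring
    rw [hL, hreg]
end
end

section
/- Let g be a map sending an input X ∈ ℝ^{s×d} and a weight matrix W ∈ ℝ^{p×q} to a matrix g(X; W) ∈ ℝ^{s×k}, and assume g is positively homogeneous in the weights: g(X; αW) = α·g(X; W) for every α > 0, X and W. Then for every m, the infimum over W_{1j} ∈ ℝ^{p×q} and W_{2j} ∈ ℝ^{k×c} (j = 1,…,m) of Σ_{i=1}^n L(Σ_{j=1}^m g(X_i; W_{1j}) W_{2j}, Y_i) + (β/2) Σ_{j=1}^m (‖W_{1j}‖_F² + ‖W_{2j}‖_F²) equals the infimum over W_{1j} with ‖W_{1j}‖_F ≤ 1 and unconstrained W_{2j} of Σ_{i=1}^n L(Σ_{j=1}^m g(X_i; W_{1j}) W_{2j}, Y_i) + β Σ_{j=1}^m ‖W_{2j}‖_F. -/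
open Matrix Pointwise Kronecker

noncomputable section

lemma frobNorm_nonneg {m n : Type*} [Fintype m] [Fintype n] (A : Matrix m n ℝ) :
    0 ≤ frobNorm A := Real.sqrt_nonneg _

lemma frobNorm_zero {m n : Type*} [Fintype m] [Fintype n] :
    frobNorm (0 : Matrix m n ℝ) = 0 := by simp [frobNorm]

lemma frobNorm_smul {m n : Type*} [Fintype m] [Fintype n] (α : ℝ) (A : Matrix m n ℝ) :
    frobNorm (α • A) = |α| * frobNorm A := by
  simp only [frobNorm, Matrix.smul_apply, smul_eq_mul, mul_pow]
  simp_rw [← Finset.mul_sum]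
  rw [Real.sqrt_mul (sq_nonneg α), Real.sqrt_sq_eq_abs]

lemma frobNorm_pos {m n : Type*} [Fintype m] [Fintype n] {A : Matrix m n ℝ} (h : A ≠ 0) :
    0 < frobNorm A := by
  rcases lt_or_eq_of_le (frobNorm_nonneg A) with h' | h'
  · exact h'
  · exfalso; apply h
    have hsum : (∑ i, ∑ j, (A i j) ^ 2) = 0 := by
      have h0 : (0:ℝ) ≤ ∑ i, ∑ j, (A i j) ^ 2 := by positivity
      have := (Real.sqrt_eq_zero h0).mp h'.symm
      linarith
    ext i j
    have hi := (Finset.sum_eq_zero_iff_of_nonneg (fun i _ => by positivity)).mp hsum i (Finset.mem_univ i)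
    have hij := (Finset.sum_eq_zero_iff_of_nonneg (fun j _ => by positivity)).mp hi j (Finset.mem_univ j)
    simpa using pow_eq_zero_iff (n := 2) (by norm_num) |>.mp hij

lemma real_iInf_eq_iInf {ι κ : Type*} [Nonempty ι] [Nonempty κ] (f : ι → ℝ) (g : κ → ℝ)
    (h1 : ∀ i, ∃ j, g j ≤ f i) (h2 : ∀ j, ∃ i, f i ≤ g j) : ⨅ i, f i = ⨅ j, g j := by
  by_cases Bf : BddBelow (Set.range f)
  · have Bg : BddBelow (Set.range g) := by
      obtain ⟨b, hb⟩ := Bf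
      refine ⟨b, ?_⟩
      rintro x ⟨j, rfl⟩
      obtain ⟨i, hi⟩ := h2 j
      exact le_trans (hb ⟨i, rfl⟩) hi
    apply le_antisymm
    · refine le_ciInf fun j => ?_
      obtain ⟨i, hi⟩ := h2 j
      exact le_trans (ciInf_le Bf i) hi
    · refine le_ciInf fun i => ?_
      obtain ⟨j, hj⟩ := h1 i
      exact le_trans (ciInf_le Bg j) hj
  · have Bg : ¬ BddBelow (Set.range g) := by
      intro Bg
      apply Bf
      obtain ⟨b, hb⟩ := Bg
      refine ⟨b, ?_⟩
      rintro x ⟨i, rfl⟩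
      obtain ⟨j, hj⟩ := h1 i
      exact le_trans (hb ⟨j, rfl⟩) hj
    rw [Real.iInf_of_not_bddBelow Bf, Real.iInf_of_not_bddBelow Bg]


/-- **Lemma 3 (rescaling).**  For a generic first layer `g` that is positively
homogeneous in its weights, the weight-decay penalized training problem equals
the problem with unit-Frobenius-norm-constrained first-layer weights and a
Frobenius-norm penalty on the second layer. -/
theorem rescaling_lemma
    (n s d c k p q m : ℕ) (hn : 0 < n) (hs : 0 < s) (hd : 0 < d) (hc : 0 < c)
    (hk : 0 < k) (hp : 0 < p) (hq : 0 < q) (hm : 0 < m)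
    (β : ℝ) (hβ : 0 < β)
    (X : Fin n → Matrix (Fin s) (Fin d) ℝ) (Y : Fin n → Matrix (Fin s) (Fin c) ℝ)
    (L : Matrix (Fin s) (Fin c) ℝ → Matrix (Fin s) (Fin c) ℝ → ℝ)
    (g : Matrix (Fin s) (Fin d) ℝ → Matrix (Fin p) (Fin q) ℝ → Matrix (Fin s) (Fin k) ℝ)
    (hg : ∀ (Xi : Matrix (Fin s) (Fin d) ℝ) (W : Matrix (Fin p) (Fin q) ℝ) (α : ℝ),
      0 < α → g Xi (α • W) = α • g Xi W) :
    (⨅ W : (Fin m → Matrix (Fin p) (Fin q) ℝ) × (Fin m → Matrix (Fin k) (Fin c) ℝ),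
      (∑ i, L (∑ j, g (X i) (W.1 j) * W.2 j) (Y i)) +
        (β / 2) * ∑ j, (frobNorm (W.1 j) ^ 2 + frobNorm (W.2 j) ^ 2))
    =
    (⨅ W : {W1 : Fin m → Matrix (Fin p) (Fin q) ℝ // ∀ j, frobNorm (W1 j) ≤ 1} ×
            (Fin m → Matrix (Fin k) (Fin c) ℝ),
      (∑ i, L (∑ j, g (X i) (W.1.1 j) * W.2 j) (Y i)) +
        β * ∑ j, frobNorm (W.2 j)) := by
  have hg0 : ∀ Xi, g Xi 0 = 0 := by
    intro Xi
    have h := hg Xi 0 2 two_pos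
    rw [smul_zero] at h
    have h2 : (2:ℝ) • g Xi 0 - g Xi 0 = 0 := by rw [← h, sub_self]
    rw [two_smul, add_sub_cancel_right] at h2
    exact h2
  have : Nonempty {W1 : Fin m → Matrix (Fin p) (Fin q) ℝ // ∀ j, frobNorm (W1 j) ≤ 1} :=
    ⟨⟨fun _ => 0, fun j => by simp [frobNorm_zero]⟩⟩
  apply real_iInf_eq_iInf
  · -- given unconstrained W, produce constrained with smaller objective
    intro W
    set A : Fin m → Matrix (Fin p) (Fin q) ℝ :=
      fun j => if W.1 j = 0 then 0 else (frobNorm (W.1 j))⁻¹ • W.1 j with hA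
    set B : Fin m → Matrix (Fin k) (Fin c) ℝ :=
      fun j => if W.1 j = 0 then 0 else frobNorm (W.1 j) • W.2 j with hB
    have hAle : ∀ j, frobNorm (A j) ≤ 1 := by
      intro j
      by_cases h : W.1 j = 0
      · simp [hA, h, frobNorm_zero]
      · have hpos := frobNorm_pos h
        simp only [hA, if_neg h, frobNorm_smul, abs_of_pos (inv_pos.mpr hpos)]
        rw [inv_mul_cancel₀ (ne_of_gt hpos)]
    refine ⟨⟨⟨A, hAle⟩, B⟩, ?_⟩
    have hprod : ∀ i j, g (X i) (A j) * B j = g (X i) (W.1 j) * W.2 j := by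
      intro i j
      by_cases h : W.1 j = 0
      · simp [hA, hB, h, hg0]
      · have hpos := frobNorm_pos h
        simp only [hA, hB, if_neg h]
        rw [hg _ _ _ (inv_pos.mpr hpos), Matrix.smul_mul, Matrix.mul_smul, smul_smul,
          inv_mul_cancel₀ (ne_of_gt hpos), one_smul]
    have hloss : (∑ i, L (∑ j, g (X i) (A j) * B j) (Y i)) =
        ∑ i, L (∑ j, g (X i) (W.1 j) * W.2 j) (Y i) := by
      refine Finset.sum_congr rfl fun i _ => ?_
      congr 1
      exact Finset.sum_congr rfl fun j _ => hprod i j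
    have hpen : ∀ j, β * frobNorm (B j) ≤
        (β / 2) * (frobNorm (W.1 j) ^ 2 + frobNorm (W.2 j) ^ 2) := by
      intro j
      by_cases h : W.1 j = 0
      · simp only [hB, if_pos h, frobNorm_zero, mul_zero]
        have h1 := frobNorm_nonneg (W.1 j)
        have h2 := frobNorm_nonneg (W.2 j)
        positivity
      · have hpos := frobNorm_pos h
        simp only [hB, if_neg h, frobNorm_smul, abs_of_pos hpos]
        have h2 := frobNorm_nonneg (W.2 j)
        nlinarith [sq_nonneg (frobNorm (W.1 j) - frobNorm (W.2 j)), hβ.le,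
          mul_nonneg hβ.le (sq_nonneg (frobNorm (W.1 j) - frobNorm (W.2 j)))]
    simp only [hloss]
    gcongr ?_ + ?_
    · exact le_rfl
    · calc β * ∑ j, frobNorm (B j) = ∑ j, β * frobNorm (B j) := Finset.mul_sum _ _ _
        _ ≤ ∑ j, (β / 2) * (frobNorm (W.1 j) ^ 2 + frobNorm (W.2 j) ^ 2) :=
            Finset.sum_le_sum fun j _ => hpen j
        _ = (β / 2) * ∑ j, (frobNorm (W.1 j) ^ 2 + frobNorm (W.2 j) ^ 2) :=
            (Finset.mul_sum _ _ _).symm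
  · -- given constrained W, produce unconstrained with smaller objective
    intro W
    set α : Fin m → ℝ := fun j => Real.sqrt (frobNorm (W.2 j) / frobNorm (W.1.1 j)) with hα
    set A : Fin m → Matrix (Fin p) (Fin q) ℝ :=
      fun j => if W.1.1 j = 0 ∨ W.2 j = 0 then 0 else α j • W.1.1 j with hA
    set B : Fin m → Matrix (Fin k) (Fin c) ℝ :=
      fun j => if W.1.1 j = 0 ∨ W.2 j = 0 then 0 else (α j)⁻¹ • W.2 j with hB
    refine ⟨⟨A, B⟩, ?_⟩
    have hαpos : ∀ j, ¬(W.1.1 j = 0 ∨ W.2 j = 0) → 0 < α j := by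
      intro j h
      push_neg at h
      exact Real.sqrt_pos.mpr (div_pos (frobNorm_pos h.2) (frobNorm_pos h.1))
    have hprod : ∀ i j, g (X i) (A j) * B j = g (X i) (W.1.1 j) * W.2 j := by
      intro i j
      by_cases h : W.1.1 j = 0 ∨ W.2 j = 0
      · rcases h with h | h
        · simp [hA, hB, h, hg0]
        · simp [hA, hB, h, hg0]
      · have hpos := hαpos j h
        simp only [hA, hB, if_neg h]
        rw [hg _ _ _ hpos, Matrix.smul_mul, Matrix.mul_smul, smul_smul,
          mul_inv_cancel₀ (ne_of_gt hpos), one_smul]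
    have hloss : (∑ i, L (∑ j, g (X i) (A j) * B j) (Y i)) =
        ∑ i, L (∑ j, g (X i) (W.1.1 j) * W.2 j) (Y i) := by
      refine Finset.sum_congr rfl fun i _ => ?_
      congr 1
      exact Finset.sum_congr rfl fun j _ => hprod i j
    have hpen : ∀ j, (β / 2) * (frobNorm (A j) ^ 2 + frobNorm (B j) ^ 2) ≤
        β * frobNorm (W.2 j) := by
      intro j
      by_cases h : W.1.1 j = 0 ∨ W.2 j = 0
      · simp only [hA, hB, if_pos h, frobNorm_zero]
        have h2 := frobNorm_nonneg (W.2 j)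
        nlinarith
      · push_neg at h
        have ha := frobNorm_pos h.1
        have hb := frobNorm_pos h.2
        have hpos := hαpos j (by push_neg; exact h)
        set a := frobNorm (W.1.1 j)
        set b := frobNorm (W.2 j)
        have hα2 : α j ^ 2 = b / a := Real.sq_sqrt (le_of_lt (div_pos hb ha))
        have hAn : frobNorm (A j) ^ 2 = (b / a) * a ^ 2 := by
          simp only [hA, if_neg (not_or.mpr h), frobNorm_smul, abs_of_pos hpos]
          rw [mul_pow, hα2]
        have hBn : frobNorm (B j) ^ 2 = (b / a)⁻¹ * b ^ 2 := by
          simp only [hB, if_neg (not_or.mpr h), frobNorm_smul, abs_of_pos (inv_pos.mpr hpos)]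
          rw [mul_pow, inv_pow, hα2]
        rw [hAn, hBn]
        have key : (b / a) * a ^ 2 + (b / a)⁻¹ * b ^ 2 = 2 * (a * b) := by
          field_simp
          ring
        rw [key]
        have hle : a ≤ 1 := W.1.2 j
        nlinarith [mul_nonneg hβ.le (mul_nonneg hb.le (sub_nonneg.mpr hle))]
    simp only [hloss]
    gcongr ?_ + ?_
    · exact le_rfl
    · calc (β / 2) * ∑ j, (frobNorm (A j) ^ 2 + frobNorm (B j) ^ 2)
          = ∑ j, (β / 2) * (frobNorm (A j) ^ 2 + frobNorm (B j) ^ 2) := Finset.mul_sum _ _ _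
        _ ≤ ∑ j, β * frobNorm (W.2 j) := Finset.sum_le_sum fun j _ => hpen j
        _ = β * ∑ j, frobNorm (W.2 j) := (Finset.mul_sum _ _ _).symm
end
end

section
/- Let Z ∈ ℝ^{d²×dc} have singular value decomposition Z = Σ_{j=1}^r σ_j u_j v_jᵀ, where σ_j > 0, the u_j ∈ ℝ^{d²} are orthonormal and the v_j ∈ ℝ^{dc} are orthonormal. Define W_{1j} ∈ ℝ^{d×d} by W_{1j}[a,k] := √σ_j · u_j[(k−1)d + a] and W_{2j} ∈ ℝ^{d×c} by W_{2j}[ℓ,p] := √σ_j · v_j[(ℓ−1)c + p]. Then Σ_{i=1}^n L(Σ_{j=1}^r (X_i W_{1j} X_iᵀ) X_i W_{2j}, Y_i) + (β/2) Σ_{j=1}^r (‖W_{1j}‖_F² + ‖W_{2j}‖_F²) = Σ_{i=1}^n L(Σ_{k=1}^d Σ_{ℓ=1}^d G_i[k,ℓ] · X_i Z^{(k,ℓ)}, Y_i) + β‖Z‖_*, where G_i := X_iᵀ X_i; in particular, every solution of the convex linear self-attention program yields weights of the non-convex linear self-attention problem achieving the same objective value. -/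
open Matrix Pointwise Kronecker

noncomputable section

open scoped MatrixOrder

private lemma trace_sqrt' {m : Type*} [Fintype m] [DecidableEq m] {A : Matrix m m ℝ}
    (hA : A.PosSemidef) :
    (CFC.sqrt A).trace = ∑ i, Real.sqrt (hA.1.eigenvalues i) := by
  rw [CFC.sqrt_eq_cfc, cfc_nnreal_eq_real _ A, hA.1.cfc_eq, Matrix.IsHermitian.cfc,
    Unitary.conjStarAlgAut_apply, Matrix.trace_mul_comm, ← Matrix.mul_assoc,
    Unitary.coe_star_mul_self]
  simp [Matrix.trace_diagonal, max_eq_left (hA.eigenvalues_nonneg _)]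

private lemma sum_mul_sum_comm' {ι₁ ι₂ κ : Type*} [Fintype ι₁] [Fintype ι₂] [Fintype κ]
    (f : ι₁ → κ → ℝ) (g : ι₂ → κ → ℝ) :
    ∑ x, (∑ j, f j x) * (∑ j', g j' x) = ∑ j, ∑ j', ∑ x, f j x * g j' x := by
  simp only [Finset.sum_mul_sum]
  rw [Finset.sum_comm]
  exact Finset.sum_congr rfl fun j _ => Finset.sum_comm

private lemma nuclearNorm_eq_sum' {ι κ : Type*} [Fintype ι] [Fintype κ] [DecidableEq κ]
    {r : ℕ} (Z : Matrix ι κ ℝ) (σ : Fin r → ℝ) (hσ : ∀ j, 0 ≤ σ j)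
    (u : Fin r → (ι → ℝ)) (v : Fin r → (κ → ℝ))
    (hu : ∀ j j', (∑ x, u j x * u j' x) = if j = j' then 1 else 0)
    (hv : ∀ j j', (∑ x, v j x * v j' x) = if j = j' then 1 else 0)
    (hZ : Z = ∑ j, σ j • Matrix.vecMulVec (u j) (v j)) :
    nuclearNorm Z = ∑ j, σ j := by
  have hA : (Zᴴ * Z).PosSemidef := Matrix.posSemidef_conjTranspose_mul_self Z
  set C : Matrix κ κ ℝ := ∑ j, σ j • Matrix.vecMulVec (v j) (v j) with hC_def
  have hCapp : ∀ a b, C a b = ∑ j, σ j * (v j a * v j b) := by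
    intro a b
    simp [hC_def, Matrix.sum_apply, Matrix.vecMulVec_apply]
  have hZapp : ∀ x a, Z x a = ∑ j, σ j * (u j x * v j a) := by
    intro x a
    simp [hZ, Matrix.sum_apply, Matrix.vecMulVec_apply]
  have hC : C.PosSemidef := by
    refine Matrix.posSemidef_iff_dotProduct_mulVec.mpr ⟨?_, ?_⟩
    · ext a b
      simp only [Matrix.conjTranspose_apply, star_trivial, hCapp]
      exact Finset.sum_congr rfl fun j _ => by ring
    · intro x
      have key : (star x) ⬝ᵥ (C *ᵥ x) = ∑ j, σ j * (∑ a, v j a * x a)^2 := by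
        calc (star x) ⬝ᵥ (C *ᵥ x)
            = ∑ a, ∑ b, ∑ j, x a * x b * (σ j * (v j a * v j b)) := by
              simp only [dotProduct, Matrix.mulVec, dotProduct, star_trivial,
                hCapp, Finset.mul_sum]
              refine Finset.sum_congr rfl fun a _ => Finset.sum_congr rfl fun b _ => ?_
              rw [Finset.sum_mul, Finset.mul_sum]
              exact Finset.sum_congr rfl fun j _ => by ring
          _ = ∑ a, ∑ j, ∑ b, x a * x b * (σ j * (v j a * v j b)) :=
              Finset.sum_congr rfl fun a _ => Finset.sum_comm
          _ = ∑ j, ∑ a, ∑ b, x a * x b * (σ j * (v j a * v j b)) := Finset.sum_comm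
          _ = ∑ j, σ j * (∑ a, v j a * x a)^2 := by
              refine Finset.sum_congr rfl fun j _ => ?_
              rw [pow_two, Finset.sum_mul_sum, Finset.mul_sum]
              refine Finset.sum_congr rfl fun a _ => ?_
              rw [Finset.mul_sum]
              exact Finset.sum_congr rfl fun b _ => by ring
      rw [key]
      exact Finset.sum_nonneg fun j _ => mul_nonneg (hσ j) (sq_nonneg _)
  have hC2 : C ^ 2 = Zᴴ * Z := by
    ext a b
    rw [pow_two]
    simp only [Matrix.mul_apply, Matrix.conjTranspose_apply, star_trivial]
    calc ∑ x, C a x * C x b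
        = ∑ j, ∑ j', ∑ x, (σ j * (v j a * v j x)) * (σ j' * (v j' x * v j' b)) := by
          simp only [hCapp]; exact sum_mul_sum_comm' _ _
      _ = ∑ j, ∑ j', (∑ x, v j x * v j' x) * (σ j * σ j' * (v j a * v j' b)) := by
          refine Finset.sum_congr rfl fun j _ => Finset.sum_congr rfl fun j' _ => ?_
          rw [Finset.sum_mul]
          exact Finset.sum_congr rfl fun x _ => by ring
      _ = ∑ j, σ j * σ j * (v j a * v j b) := by
          simp only [hv, ite_mul, one_mul, zero_mul, Finset.sum_ite_eq, Finset.mem_univ, if_true]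
      _ = ∑ x, Z x a * Z x b := by
          symm
          calc ∑ x, Z x a * Z x b
              = ∑ j, ∑ j', ∑ x, (σ j * (u j x * v j a)) * (σ j' * (u j' x * v j' b)) := by
                simp only [hZapp]; exact sum_mul_sum_comm' _ _
            _ = ∑ j, ∑ j', (∑ x, u j x * u j' x) * (σ j * σ j' * (v j a * v j' b)) := by
                refine Finset.sum_congr rfl fun j _ => Finset.sum_congr rfl fun j' _ => ?_
                rw [Finset.sum_mul]
                exact Finset.sum_congr rfl fun x _ => by ring
            _ = ∑ j, σ j * σ j * (v j a * v j b) := by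
                simp only [hu, ite_mul, one_mul, zero_mul, Finset.sum_ite_eq, Finset.mem_univ,
                  if_true]
  have hCsqrt : C = CFC.sqrt (Zᴴ * Z) :=
    ((CFC.sqrt_eq_iff _ _ hA.nonneg hC.nonneg).mpr (by rw [← sq]; exact hC2)).symm
  have h1 : nuclearNorm Z = (CFC.sqrt (Zᴴ * Z)).trace := (trace_sqrt' hA).symm
  rw [h1, ← hCsqrt, Matrix.trace]
  simp only [Matrix.diag_apply, hCapp]
  rw [Finset.sum_comm]
  refine Finset.sum_congr rfl fun j _ => ?_
  rw [← Finset.mul_sum, hv j j]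
  simp

private lemma mul3' {s d c : Type*} [Fintype s] [Fintype d] [Fintype c]
    (M : Matrix s d ℝ) (G : Matrix d d ℝ) (V : Matrix d c ℝ) :
    M * G * V = ∑ k, ∑ l, G k l • Matrix.vecMulVec (fun t => M t k) (fun p => V l p) := by
  ext t p
  simp only [Matrix.mul_apply, Matrix.sum_apply, Matrix.smul_apply, Matrix.vecMulVec_apply,
    smul_eq_mul]
  calc ∑ l, (∑ k, M t k * G k l) * V l p
      = ∑ l, ∑ k, G k l * (M t k * V l p) := by
        refine Finset.sum_congr rfl fun l _ => ?_
        rw [Finset.sum_mul]; exact Finset.sum_congr rfl fun k _ => by ring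
    _ = ∑ k, ∑ l, G k l * (M t k * V l p) := Finset.sum_comm

private lemma attn_eq' {s d c r : ℕ}
    (X : Matrix (Fin s) (Fin d) ℝ)
    (Z : Matrix (Fin d × Fin d) (Fin d × Fin c) ℝ)
    (σ : Fin r → ℝ) (hσ : ∀ j, 0 ≤ σ j)
    (u : Fin r → (Fin d × Fin d → ℝ)) (v : Fin r → (Fin d × Fin c → ℝ))
    (hZ : Z = ∑ j, σ j • Matrix.vecMulVec (u j) (v j)) :
    (∑ j : Fin r,
        X * (Matrix.of fun a k => Real.sqrt (σ j) * u j (k, a)) * Xᵀ *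
          X * (Matrix.of fun l p => Real.sqrt (σ j) * v j (l, p)))
    = ∑ k : Fin d, ∑ l : Fin d,
        (Xᵀ * X) k l • (X * Matrix.of fun a p => Z (k, a) (l, p)) := by
  have hZapp : ∀ x a, Z x a = ∑ j, σ j * (u j x * v j a) := by
    intro x a
    simp [hZ, Matrix.sum_apply, Matrix.vecMulVec_apply]
  set G := Xᵀ * X with hG
  set M : Fin r → Fin d → Fin d → Matrix (Fin s) (Fin c) ℝ :=
    fun j k l => X * Matrix.of (fun a p => u j (k, a) * v j (l, p)) with hM
  have step1 : ∀ j : Fin r,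
      X * (Matrix.of fun a k => Real.sqrt (σ j) * u j (k, a)) * Xᵀ *
        X * (Matrix.of fun l p => Real.sqrt (σ j) * v j (l, p))
      = σ j • ((X * Matrix.of (fun a k => u j (k, a))) * G *
          Matrix.of (fun l p => v j (l, p))) := by
    intro j
    have w1 : (Matrix.of fun a k => Real.sqrt (σ j) * u j (k, a))
        = Real.sqrt (σ j) • Matrix.of (fun a k => u j (k, a)) := by
      ext a k; simp
    have w2 : (Matrix.of fun l p => Real.sqrt (σ j) * v j (l, p))
        = Real.sqrt (σ j) • Matrix.of (fun l p => v j (l, p)) := by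
      ext l p; simp
    rw [w1, w2]
    simp only [Matrix.mul_smul, Matrix.smul_mul, smul_smul]
    rw [Real.mul_self_sqrt (hσ j), hG,
      Matrix.mul_assoc (X * Matrix.of (fun a k => u j (k, a))) Xᵀ X]
  have step2 : ∀ j : Fin r,
      (X * Matrix.of (fun a k => u j (k, a))) * G * Matrix.of (fun l p => v j (l, p))
      = ∑ k, ∑ l, G k l • M j k l := by
    intro j
    rw [mul3']
    refine Finset.sum_congr rfl fun k _ => Finset.sum_congr rfl fun l _ => ?_
    congr 1
    ext t p
    simp only [Matrix.vecMulVec_apply, hM, Matrix.mul_apply, Matrix.of_apply, Finset.sum_mul]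
    exact Finset.sum_congr rfl fun a _ => by ring
  calc ∑ j : Fin r, X * (Matrix.of fun a k => Real.sqrt (σ j) * u j (k, a)) * Xᵀ *
          X * (Matrix.of fun l p => Real.sqrt (σ j) * v j (l, p))
      = ∑ j, σ j • ∑ k, ∑ l, G k l • M j k l := by
        refine Finset.sum_congr rfl fun j _ => ?_
        rw [step1 j, step2 j]
    _ = ∑ j, ∑ k, ∑ l, σ j • (G k l • M j k l) := by
        refine Finset.sum_congr rfl fun j _ => ?_
        rw [Finset.smul_sum]
        exact Finset.sum_congr rfl fun k _ => Finset.smul_sum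
    _ = ∑ k, ∑ j, ∑ l, σ j • (G k l • M j k l) := Finset.sum_comm
    _ = ∑ k, ∑ l, ∑ j, σ j • (G k l • M j k l) :=
        Finset.sum_congr rfl fun k _ => Finset.sum_comm
    _ = ∑ k, ∑ l, G k l • (X * Matrix.of fun a p => Z (k, a) (l, p)) := by
        refine Finset.sum_congr rfl fun k _ => Finset.sum_congr rfl fun l _ => ?_
        have : (Matrix.of fun a p => Z (k, a) (l, p))
            = ∑ j, σ j • Matrix.of (fun a p => u j (k, a) * v j (l, p)) := by
          ext a p
          simp [hZapp, Matrix.sum_apply]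
        rw [this, Matrix.mul_sum, Finset.smul_sum]
        refine Finset.sum_congr rfl fun j _ => ?_
        rw [Matrix.mul_smul, smul_comm]

/-- **Convex-to-non-convex mapping for linear self-attention.**
Given a singular value decomposition `Z = Σ_j σ_j u_j v_jᵀ` (with `σ_j > 0` and
orthonormal families `u_j ∈ ℝ^{d²}`, `v_j ∈ ℝ^{dc}`, rows of `Z` indexed
block-major by `Fin d × Fin d` and columns by `Fin d × Fin c`), the weights
`W₁ⱼ[a,k] = √σ_j · u_j[(k,a)]` and `W₂ⱼ[ℓ,p] = √σ_j · v_j[(ℓ,p)]` achieve the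
same objective value in the non-convex linear self-attention problem as `Z`
does in the convex program. -/
theorem linear_self_attention_convex_to_nonconvex_map
    (n s d c r : ℕ) (hn : 0 < n) (hs : 0 < s) (hd : 0 < d) (hc : 0 < c)
    (β : ℝ) (hβ : 0 < β)
    (X : Fin n → Matrix (Fin s) (Fin d) ℝ) (Y : Fin n → Matrix (Fin s) (Fin c) ℝ)
    (L : Matrix (Fin s) (Fin c) ℝ → Matrix (Fin s) (Fin c) ℝ → ℝ)
    (Z : Matrix (Fin d × Fin d) (Fin d × Fin c) ℝ)
    (σ : Fin r → ℝ) (hσ : ∀ j, 0 < σ j)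
    (u : Fin r → (Fin d × Fin d → ℝ)) (v : Fin r → (Fin d × Fin c → ℝ))
    (hu : ∀ j j', (∑ x, u j x * u j' x) = if j = j' then 1 else 0)
    (hv : ∀ j j', (∑ x, v j x * v j' x) = if j = j' then 1 else 0)
    (hZ : Z = ∑ j, σ j • Matrix.vecMulVec (u j) (v j)) :
    (∑ i, L (∑ j : Fin r,
        X i * (Matrix.of fun a k => Real.sqrt (σ j) * u j (k, a)) * (X i)ᵀ *
          (X i) * (Matrix.of fun l p => Real.sqrt (σ j) * v j (l, p))) (Y i)) +
      (β / 2) * ∑ j : Fin r,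
        (frobNorm (Matrix.of fun a k => Real.sqrt (σ j) * u j (k, a)) ^ 2 +
         frobNorm (Matrix.of fun l p => Real.sqrt (σ j) * v j (l, p)) ^ 2)
    =
    (∑ i, L (∑ k : Fin d, ∑ l : Fin d,
        ((X i)ᵀ * X i) k l • (X i * Matrix.of fun a p => Z (k, a) (l, p))) (Y i)) +
      β * nuclearNorm Z := by
  have hσ' : ∀ j, 0 ≤ σ j := fun j => (hσ j).le
  have hfrob1 : ∀ j : Fin r,
      frobNorm (Matrix.of fun a k => Real.sqrt (σ j) * u j (k, a)) ^ 2 = σ j := by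
    intro j
    rw [frobNorm, Real.sq_sqrt (by positivity)]
    simp only [Matrix.of_apply, mul_pow, Real.sq_sqrt (hσ' j), ← Finset.mul_sum]
    have : ∑ a : Fin d, ∑ k : Fin d, u j (k, a) ^ 2 = ∑ x, u j x * u j x := by
      rw [Fintype.sum_prod_type]
      rw [Finset.sum_comm]
      exact Finset.sum_congr rfl fun a _ => Finset.sum_congr rfl fun k _ => (sq _)
    rw [this, hu j j]
    simp
  have hfrob2 : ∀ j : Fin r,
      frobNorm (Matrix.of fun l p => Real.sqrt (σ j) * v j (l, p)) ^ 2 = σ j := by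
    intro j
    rw [frobNorm, Real.sq_sqrt (by positivity)]
    simp only [Matrix.of_apply, mul_pow, Real.sq_sqrt (hσ' j), ← Finset.mul_sum]
    have : ∑ l : Fin d, ∑ p : Fin c, v j (l, p) ^ 2 = ∑ x, v j x * v j x := by
      rw [Fintype.sum_prod_type]
      exact Finset.sum_congr rfl fun l _ => Finset.sum_congr rfl fun p _ => (sq _)
    rw [this, hv j j]
    simp
  have hloss : ∀ i : Fin n,
      (∑ j : Fin r,
        X i * (Matrix.of fun a k => Real.sqrt (σ j) * u j (k, a)) * (X i)ᵀ *
          (X i) * (Matrix.of fun l p => Real.sqrt (σ j) * v j (l, p)))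
      = ∑ k : Fin d, ∑ l : Fin d,
          ((X i)ᵀ * X i) k l • (X i * Matrix.of fun a p => Z (k, a) (l, p)) :=
    fun i => attn_eq' (X i) Z σ hσ' u v hZ
  have hnuc : nuclearNorm Z = ∑ j, σ j := nuclearNorm_eq_sum' Z σ hσ' u v hu hv hZ
  have hreg : (β / 2) * ∑ j : Fin r,
        (frobNorm (Matrix.of fun a k => Real.sqrt (σ j) * u j (k, a)) ^ 2 +
         frobNorm (Matrix.of fun l p => Real.sqrt (σ j) * v j (l, p)) ^ 2)
      = β * nuclearNorm Z := by
    rw [hnuc]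
    simp only [hfrob1, hfrob2]
    rw [Finset.sum_add_distrib]
    ring
  rw [hreg]
  congr 1
  exact Finset.sum_congr rfl fun i _ => by rw [hloss i]
end
end
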